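/- Let F : P → ℂ be arbitrary and define f(λ) := ∑_{δ|λ} F(δ)·μ(λ/δ). Then the q-bracket of F is given explicitly by ⟨F⟩_q = ∑_{λ∈P} f(λ) q^{|λ|}; equivalently, for every integer n ≥ 0, ∑_{λ⊢n} F(λ) = ∑_{k=0}^{n} (∑_{δ⊢k} f(δ)) · p(n−k). -/

import Mathlib

/-- The set of partition divisors (sub-partitions) of `l`. -/
def pdivisors (l : Multiset ℕ+) : Finset (Multiset ℕ+) := l.powerset.toFinset

/-- Partition-theoretic Möbius function. -/
def pmu (l : Multiset ℕ+) : ℂ := if l.Nodup then (-1 : ℂ) ^ (Multiset.card l) else 0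

/-- The "integer" of a partition: the product of its parts. -/
def nInt (l : Multiset ℕ+) : ℕ := (l.map (fun a => (a : ℕ))).prod

/-- Partition-theoretic phi function. -/
noncomputable def pphi (l : Multiset ℕ+) : ℂ :=
  (nInt l : ℂ) * ∏ a ∈ l.toFinset, (1 - (a : ℂ)⁻¹)

/-- Convert a `Nat.Partition n` to a multiset of positive integers. -/
def toPtn {n : ℕ} (p : n.Partition) : Multiset ℕ+ :=
  p.parts.pmap (fun x hx => ⟨x, hx⟩) (fun _ hx => p.parts_pos hx)

/-- The partition function `p(n)`. -/
def partcount (n : ℕ) : ℕ := Fintype.card (Nat.Partition n)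

/-- A partition lies in `P₌` iff it is nonempty with all parts equal. -/
def isPeq (l : Multiset ℕ+) : Prop :=
  ∃ (a : ℕ+) (k : ℕ), 0 < k ∧ l = Multiset.replicate k a

namespace QBaux

lemma mem_pdivisors {l d : Multiset ℕ+} : d ∈ pdivisors l ↔ d ≤ l := by
  simp [pdivisors, Multiset.mem_powerset]

/-- The size of a partition-multiset. -/
def psum (l : Multiset ℕ+) : ℕ := (Multiset.map PNat.val l).sum

lemma psum_add (a b : Multiset ℕ+) : psum (a + b) = psum a + psum b := by
  simp [psum]

lemma psum_sub {a b : Multiset ℕ+} (h : b ≤ a) : psum (a - b) = psum a - psum b := by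
  have : a = b + (a - b) := (add_tsub_cancel_of_le h).symm
  rw [this, psum_add] at *
  simp

lemma toPtn_map {n : ℕ} (p : n.Partition) :
    Multiset.map PNat.val (toPtn p) = p.parts := by
  exact (Multiset.map_pmap (p := fun x => 0 < x) PNat.val (fun x hx => (⟨x, hx⟩ : ℕ+)) p.parts _).trans
    ((Multiset.pmap_eq_map _ id _ _).trans (Multiset.map_id _))

lemma psum_toPtn {n : ℕ} (p : n.Partition) : psum (toPtn p) = n := by
  rw [psum, toPtn_map, p.parts_sum]

lemma toPtn_injective {n : ℕ} : Function.Injective (toPtn (n := n)) := by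
  intro p q h
  have := congrArg (Multiset.map PNat.val) h
  rw [toPtn_map, toPtn_map] at this
  exact Nat.Partition.ext this

/-- The finset of partition-multisets of size `n`. -/
noncomputable def S (n : ℕ) : Finset (Multiset ℕ+) :=
  (Finset.univ : Finset (Nat.Partition n)).image toPtn

lemma mem_S {n : ℕ} {l : Multiset ℕ+} : l ∈ S n ↔ psum l = n := by
  constructor
  · rintro h
    rcases Finset.mem_image.mp h with ⟨p, -, rfl⟩
    exact psum_toPtn p
  · intro h
    refine Finset.mem_image.mpr ⟨⟨Multiset.map PNat.val l, ?_, h⟩, Finset.mem_univ _, ?_⟩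
    · intro x hx
      rcases Multiset.mem_map.mp hx with ⟨a, -, rfl⟩
      exact a.pos
    · apply Multiset.map_injective (f := PNat.val) PNat.coe_injective
      rw [toPtn_map]

lemma card_S (n : ℕ) : (S n).card = partcount n := by
  rw [S, Finset.card_image_of_injective _ toPtn_injective, Finset.card_univ, partcount]

lemma sum_S {n : ℕ} (g : Multiset ℕ+ → ℂ) :
    (∑ p : n.Partition, g (toPtn p)) = ∑ l ∈ S n, g l :=
  (Finset.sum_image (fun p _ q _ h => toPtn_injective h)).symm

lemma sum_pmu (m : Multiset ℕ+) :
    ∑ γ ∈ pdivisors m, pmu γ = if m = 0 then 1 else 0 := by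
  classical
  have h1 : ∑ γ ∈ pdivisors m, pmu γ
      = ∑ γ ∈ (pdivisors m).filter (fun γ => γ.Nodup), (-1 : ℂ) ^ (Multiset.card γ) := by
    rw [Finset.sum_filter]
    exact Finset.sum_congr rfl fun γ _ => rfl
  have h2 : ∑ γ ∈ (pdivisors m).filter (fun γ => γ.Nodup), (-1 : ℂ) ^ (Multiset.card γ)
      = ∑ s ∈ m.toFinset.powerset, (-1 : ℂ) ^ s.card := by
    refine Finset.sum_nbij' (fun γ => γ.toFinset) (fun s => s.val) ?_ ?_ ?_ ?_ ?_
    · intro γ hγ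
      rcases Finset.mem_filter.mp hγ with ⟨hle, _⟩
      refine Finset.mem_powerset.mpr fun a ha => ?_
      exact Multiset.mem_toFinset.mpr
        (Multiset.subset_of_le (mem_pdivisors.mp hle) (Multiset.mem_toFinset.mp ha))
    · intro s hs
      refine Finset.mem_filter.mpr ⟨mem_pdivisors.mpr ?_, s.nodup⟩
      refine (Multiset.le_iff_subset s.nodup).mpr fun a ha => ?_
      exact Multiset.mem_toFinset.mp (Finset.mem_powerset.mp hs ha)
    · intro γ hγ
      rcases Finset.mem_filter.mp hγ with ⟨_, hnd⟩
      simpa [Multiset.toFinset_val] using hnd.dedup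
    · intro s _
      exact Finset.val_toFinset s
    · intro γ hγ
      rcases Finset.mem_filter.mp hγ with ⟨_, hnd⟩
      rw [Multiset.toFinset_card_of_nodup hnd]
  have h3 : ∑ s ∈ m.toFinset.powerset, (-1 : ℂ) ^ s.card
      = ((∑ s ∈ m.toFinset.powerset, (-1 : ℤ) ^ s.card : ℤ) : ℂ) := by push_cast; rfl
  rw [h1, h2, h3, Finset.sum_powerset_neg_one_pow_card]
  by_cases h : m = 0 <;> simp [h, Multiset.toFinset_eq_empty]

lemma sum_divisors_f (F f : Multiset ℕ+ → ℂ)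
    (hf : ∀ l : Multiset ℕ+, f l = ∑ δ ∈ pdivisors l, F δ * pmu (l - δ))
    (l : Multiset ℕ+) : ∑ d ∈ pdivisors l, f d = F l := by
  classical
  have step1 : ∑ d ∈ pdivisors l, f d
      = ∑ x ∈ (pdivisors l).sigma (fun d => pdivisors d), F x.2 * pmu (x.1 - x.2) := by
    rw [Finset.sum_sigma]
    exact Finset.sum_congr rfl fun d _ => hf d
  have step2 : ∑ x ∈ (pdivisors l).sigma (fun d => pdivisors d), F x.2 * pmu (x.1 - x.2)
      = ∑ y ∈ (pdivisors l).sigma (fun δ => pdivisors (l - δ)), F y.1 * pmu y.2 := by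
    refine Finset.sum_nbij' (fun x => ⟨x.2, x.1 - x.2⟩) (fun y => ⟨y.1 + y.2, y.1⟩)
      ?_ ?_ ?_ ?_ ?_
    · rintro ⟨d, δ⟩ hx
      rcases Finset.mem_sigma.mp hx with ⟨hd, hδ⟩
      exact Finset.mem_sigma.mpr ⟨mem_pdivisors.mpr (le_trans (mem_pdivisors.mp hδ)
        (mem_pdivisors.mp hd)), mem_pdivisors.mpr
        (tsub_le_tsub_right (mem_pdivisors.mp hd) δ)⟩
    · rintro ⟨δ, γ⟩ hy
      rcases Finset.mem_sigma.mp hy with ⟨hδ, hγ⟩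
      refine Finset.mem_sigma.mpr ⟨mem_pdivisors.mpr ?_, mem_pdivisors.mpr le_self_add⟩
      calc δ + γ ≤ δ + (l - δ) := add_le_add_right (mem_pdivisors.mp hγ) δ
        _ = l := add_tsub_cancel_of_le (mem_pdivisors.mp hδ)
    · rintro ⟨d, δ⟩ hx
      rcases Finset.mem_sigma.mp hx with ⟨-, hδ⟩
      simp [add_tsub_cancel_of_le (mem_pdivisors.mp hδ)]
    · rintro ⟨δ, γ⟩ -
      simp
    · rintro ⟨d, δ⟩ -
      rfl
  have step3 : ∑ y ∈ (pdivisors l).sigma (fun δ => pdivisors (l - δ)), F y.1 * pmu y.2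
      = ∑ δ ∈ pdivisors l, F δ * (if l - δ = 0 then 1 else 0) := by
    rw [Finset.sum_sigma]
    refine Finset.sum_congr rfl fun δ _ => ?_
    show ∑ γ ∈ pdivisors (l - δ), F δ * pmu γ = _
    rw [← Finset.mul_sum, sum_pmu]
  rw [step1, step2, step3]
  rw [Finset.sum_eq_single_of_mem l (mem_pdivisors.mpr le_rfl)]
  · simp
  · intro δ hδ hne
    have : ¬ (l - δ = 0) := by
      intro h
      exact hne (le_antisymm (mem_pdivisors.mp hδ) (tsub_eq_zero_iff_le.mp h))
    simp [this]

end QBaux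

open QBaux in
/-- For arbitrary `F : P → ℂ`, with `f(λ) := ∑_{δ|λ} F(δ)·μ(λ/δ)`, we have
`⟨F⟩_q = ∑_{λ∈P} f(λ) q^{|λ|}`: in graded form, for every `n ≥ 0`,
`∑_{λ⊢n} F(λ) = ∑_{k=0}^{n} (∑_{δ⊢k} f(δ))·p(n−k)`. -/
theorem qbracket_coefficients (F f : Multiset ℕ+ → ℂ)
    (hf : ∀ l : Multiset ℕ+, f l = ∑ δ ∈ pdivisors l, F δ * pmu (l - δ)) (n : ℕ) :
    (∑ p : n.Partition, F (toPtn p))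
      = ∑ k ∈ Finset.range (n + 1),
          (∑ d : k.Partition, f (toPtn d)) * (partcount (n - k) : ℂ) := by
  classical
  rw [sum_S F]
  have hR : ∀ k, (∑ d : k.Partition, f (toPtn d)) * (partcount (n - k) : ℂ)
      = ∑ x ∈ (S k) ×ˢ (S (n - k)), f x.1 := by
    intro k
    rw [sum_S f, ← card_S, Finset.sum_product, Finset.sum_mul]
    refine Finset.sum_congr rfl fun d _ => ?_
    show f d * ((S (n - k)).card : ℂ) = ∑ _e ∈ S (n - k), f d
    rw [Finset.sum_const, nsmul_eq_mul, mul_comm]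
  simp only [hR]
  have key : ∑ x ∈ (Finset.range (n + 1)).sigma (fun k => (S k) ×ˢ (S (n - k))), f x.2.1
      = ∑ y ∈ (S n).sigma (fun l => pdivisors l), f y.2 := by
    refine Finset.sum_nbij' (fun x => ⟨x.2.1 + x.2.2, x.2.1⟩)
      (fun y => ⟨psum y.2, (y.2, y.1 - y.2)⟩) ?_ ?_ ?_ ?_ ?_
    · rintro ⟨k, d, e⟩ hx
      rcases Finset.mem_sigma.mp hx with ⟨hk, hde⟩
      rcases Finset.mem_product.mp hde with ⟨hd, he⟩
      refine Finset.mem_sigma.mpr ⟨mem_S.mpr ?_, mem_pdivisors.mpr le_self_add⟩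
      rw [psum_add, mem_S.mp hd, mem_S.mp he]
      have := Finset.mem_range.mp hk
      omega
    · rintro ⟨l, d⟩ hy
      rcases Finset.mem_sigma.mp hy with ⟨hl, hd⟩
      have hdl : d ≤ l := mem_pdivisors.mp hd
      have hps : psum d ≤ n := by
        rw [← mem_S.mp hl]
        have : l = d + (l - d) := (add_tsub_cancel_of_le hdl).symm
        rw [this, psum_add]; exact Nat.le_add_right _ _
      refine Finset.mem_sigma.mpr ⟨Finset.mem_range.mpr (Nat.lt_succ_of_le hps),
        Finset.mem_product.mpr ⟨mem_S.mpr rfl, mem_S.mpr ?_⟩⟩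
      rw [psum_sub hdl, mem_S.mp hl]
    · rintro ⟨k, d, e⟩ hx
      rcases Finset.mem_sigma.mp hx with ⟨-, hde⟩
      rcases Finset.mem_product.mp hde with ⟨hd, -⟩
      have h1 : psum d = k := mem_S.mp hd
      simp [h1, add_tsub_cancel_left]
    · rintro ⟨l, d⟩ hy
      rcases Finset.mem_sigma.mp hy with ⟨-, hd⟩
      simp [add_tsub_cancel_of_le (mem_pdivisors.mp hd)]
    · rintro ⟨k, d, e⟩ -
      rfl
  calc ∑ l ∈ S n, F l
      = ∑ l ∈ S n, ∑ d ∈ pdivisors l, f d :=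
        Finset.sum_congr rfl fun l _ => (sum_divisors_f F f hf l).symm
    _ = ∑ y ∈ (S n).sigma (fun l => pdivisors l), f y.2 := by rw [Finset.sum_sigma]
    _ = ∑ x ∈ (Finset.range (n + 1)).sigma (fun k => (S k) ×ˢ (S (n - k))), f x.2.1 :=
        key.symm
    _ = ∑ k ∈ Finset.range (n + 1), ∑ x ∈ (S k) ×ˢ (S (n - k)), f x.1 := by
        rw [Finset.sum_sigma]
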